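/- Let d ≥ 2, let a ∈ ℝ^d, and let c_{i,j} (i ≠ j) be real constants with c_{i,j} = c_{j,i} ≥ 0 for all i ≠ j. If ξ, μ ∈ Δ_d both satisfy ξ_i = a_i + Σ_{j ≠ i} c_{i,j}/(ξ_i − ξ_j) and μ_i = a_i + Σ_{j ≠ i} c_{i,j}/(μ_i − μ_j) for all i = 1,…,d, then ξ = μ. -/
import Mathlib


open Finset

/-- Uniqueness in the Weyl chamber `Δ_d` of solutions of the
system `ξ i = a i + ∑_{j ≠ i} c i j / (ξ i - ξ j)` for symmetric nonnegative `c`. -/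
theorem strictMono_solution_unique
    (d : ℕ) (hd : 2 ≤ d) (a : Fin d → ℝ) (c : Fin d → Fin d → ℝ)
    (hsymm : ∀ i j : Fin d, i ≠ j → c i j = c j i)
    (hnonneg : ∀ i j : Fin d, i ≠ j → 0 ≤ c i j)
    (ξ μ : Fin d → ℝ) (hξ : StrictMono ξ) (hμ : StrictMono μ)
    (hξeq : ∀ i : Fin d, ξ i = a i + ∑ j ∈ Finset.univ.erase i, c i j / (ξ i - ξ j))
    (hμeq : ∀ i : Fin d, μ i = a i + ∑ j ∈ Finset.univ.erase i, c i j / (μ i - μ j)) :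
    ξ = μ := by
  set δ : Fin d → ℝ := fun i => ξ i - μ i with hδdef
  set e : Fin d → Fin d → ℝ :=
    fun i j => c i j / (ξ i - ξ j) - c i j / (μ i - μ j) with hedef
  have hξne : ∀ i j : Fin d, i ≠ j → ξ i - ξ j ≠ 0 := fun i j h =>
    sub_ne_zero.2 fun e => h (hξ.injective e)
  have hμne : ∀ i j : Fin d, i ≠ j → μ i - μ j ≠ 0 := fun i j h =>
    sub_ne_zero.2 fun e => h (hμ.injective e)
  have hP : ∀ i j : Fin d, i ≠ j → 0 < (ξ i - ξ j) * (μ i - μ j) := by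
    intro i j h
    rcases h.lt_or_gt with hlt | hlt
    · exact mul_pos_of_neg_of_neg (sub_neg.2 (hξ hlt)) (sub_neg.2 (hμ hlt))
    · exact mul_pos (sub_pos.2 (hξ hlt)) (sub_pos.2 (hμ hlt))
  have hδeq : ∀ i, δ i = ∑ j ∈ univ.erase i, e i j := by
    intro i
    have : δ i = (a i + ∑ j ∈ univ.erase i, c i j / (ξ i - ξ j))
        - (a i + ∑ j ∈ univ.erase i, c i j / (μ i - μ j)) := by
      rw [← hξeq i, ← hμeq i]
    rw [this, Finset.sum_sub_distrib]
    ring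
  -- swap lemma for iterated sums over erased diagonals
  have hswap : ∀ g : Fin d → Fin d → ℝ,
      (∑ i, ∑ j ∈ univ.erase i, g i j) = ∑ i, ∑ j ∈ univ.erase i, g j i := by
    intro g
    have h1 : ∀ h : Fin d → Fin d → ℝ, (∑ i, ∑ j ∈ univ.erase i, h i j)
        = ∑ i, ∑ j, if i = j then 0 else h i j := by
      intro h
      refine Finset.sum_congr rfl fun i _ => ?_
      calc ∑ j ∈ univ.erase i, h i j
          = ∑ j ∈ univ.erase i, (if i = j then 0 else h i j) :=
            Finset.sum_congr rfl fun j hj =>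
              (if_neg (Finset.ne_of_mem_erase hj).symm).symm
        _ = ∑ j, if i = j then 0 else h i j :=
            Finset.sum_subset (Finset.subset_univ _) fun x _ hx => by
              simp only [Finset.mem_erase, Finset.mem_univ, and_true, not_not] at hx
              simp [hx]
    rw [h1 g, h1 fun i j => g j i, Finset.sum_comm]
    refine Finset.sum_congr rfl fun i _ => Finset.sum_congr rfl fun j _ => ?_
    rcases eq_or_ne i j with h | h
    · simp [h]
    · simp [h, h.symm]
  have hpair : ∀ i j : Fin d, i ≠ j →
      δ i * e i j + δ j * e j i
        = -(c i j * (δ i - δ j) ^ 2 / ((ξ i - ξ j) * (μ i - μ j))) := by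
    intro i j h
    have h1 := hξne i j h
    have h2 := hμne i j h
    have h3 := hξne j i h.symm
    have h4 := hμne j i h.symm
    simp only [hedef, hδdef, ← hsymm i j h]
    field_simp
    ring
  have hsumsq : ∑ i, δ i ^ 2 = ∑ i, ∑ j ∈ univ.erase i, δ i * e i j := by
    refine Finset.sum_congr rfl fun i _ => ?_
    rw [← Finset.mul_sum, ← hδeq i, sq]
  have hmain : 2 * ∑ i, δ i ^ 2 ≤ 0 := by
    have : 2 * ∑ i, δ i ^ 2
        = ∑ i, ∑ j ∈ univ.erase i, (δ i * e i j + δ j * e j i) := by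
      rw [two_mul, hsumsq]
      nth_rewrite 2 [hswap fun i j => δ i * e i j]
      rw [← Finset.sum_add_distrib]
      refine Finset.sum_congr rfl fun i _ => ?_
      rw [← Finset.sum_add_distrib]
    rw [this]
    refine Finset.sum_nonpos fun i _ => Finset.sum_nonpos fun j hj => ?_
    have hij : i ≠ j := (Finset.ne_of_mem_erase hj).symm
    rw [hpair i j hij]
    have : 0 ≤ c i j * (δ i - δ j) ^ 2 / ((ξ i - ξ j) * (μ i - μ j)) :=
      div_nonneg (mul_nonneg (hnonneg i j hij) (sq_nonneg _)) (hP i j hij).le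
    linarith
  have hle : ∑ i, δ i ^ 2 ≤ 0 := by linarith
  have hzero : ∀ i ∈ (univ : Finset (Fin d)), δ i ^ 2 = 0 := by
    rw [← Finset.sum_eq_zero_iff_of_nonneg fun i _ => sq_nonneg (δ i)]
    exact le_antisymm hle (Finset.sum_nonneg fun i _ => sq_nonneg _)
  funext i
  have := hzero i (Finset.mem_univ i)
  have : δ i = 0 := by
    have := sq_eq_zero_iff.mp this
    exact this
  simpa [hδdef, sub_eq_zero] using this
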